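/- Let n ≥ 1 be an integer, σ > 0 and 0 < α < 1. Let Z and Z' be standard normal random variables and M and M' be chi-squared distributed with n degrees of freedom, with Z, Z', M, M' jointly independent. Set σ̂ := σ·√(M/n) and T' := √(n/M')·Z', and let F_{T'} denote the cumulative distribution function of T' and F_{T'}^{−1}(α) its α-quantile. Then P( σ·Z ≤ σ̂·F_{T'}^{−1}(α) ) = α; that is, the fiducial (inversion-method) solvency capital SCR(α) := σ̂·F_{T'}^{−1}(α), computed with the random estimate σ̂, attains probability of solvency exactly α. -/

import Mathlib

open MeasureTheory ProbabilityTheory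

/-- The chi-squared distribution with `n` degrees of freedom: the Gamma distribution
with shape `n/2` and rate `1/2`. -/
noncomputable def chiSquaredMeasure (n : ℕ) : Measure ℝ :=
  gammaMeasure ((n : ℝ) / 2) (1 / 2)

lemma chiSquaredMeasure_Iic_zero (n : ℕ) : chiSquaredMeasure n (Set.Iic 0) = 0 := by
  have h : Set.Iic (0:ℝ) = Set.Iio 0 ∪ {0} := by
    ext x; simp [le_iff_lt_or_eq]
  rw [chiSquaredMeasure, gammaMeasure, h]
  apply measure_union_null
  · rw [withDensity_apply _ measurableSet_Iio]
    exact lintegral_gammaPDF_of_nonpos le_rfl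
  · rw [withDensity_apply _ (measurableSet_singleton 0)]
    exact setLIntegral_measure_zero _ _ (by simp)

/-- The fiducial (inversion-method) solvency capital `SCR(α) := σ̂·F_{T'}⁻¹(α)` with
`σ̂ := σ·√(M/n)` and `T' := √(n/M')·Z'` attains probability of solvency exactly `α`:
`P(σ·Z ≤ σ̂·F_{T'}⁻¹(α)) = α`. -/
theorem fiducial_scr_attains_alpha
    {Ω : Type*} [MeasurableSpace Ω] (P : Measure Ω) [IsProbabilityMeasure P]
    (n : ℕ) (hn : 1 ≤ n) (σ : ℝ) (hσ : 0 < σ) (α : ℝ) (hα0 : 0 < α) (hα1 : α < 1)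
    (Z Z' M M' : Ω → ℝ)
    (hZmeas : Measurable Z) (hZ'meas : Measurable Z')
    (hMmeas : Measurable M) (hM'meas : Measurable M')
    (hindep : iIndepFun ![Z, Z', M, M'] P)
    (hZ : P.map Z = gaussianReal 0 1) (hZ' : P.map Z' = gaussianReal 0 1)
    (hM : P.map M = chiSquaredMeasure n) (hM' : P.map M' = chiSquaredMeasure n)
    -- `q = F_{T'}⁻¹(α)` is the `α`-quantile of `T' := √(n/M')·Z'`
    (q : ℝ)
    (hq : cdf (P.map (fun ω => Real.sqrt ((n : ℝ) / M' ω) * Z' ω)) q = α) :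
    P {ω | σ * Z ω ≤ σ * Real.sqrt (M ω / (n : ℝ)) * q} = ENNReal.ofReal α := by
  have hn0 : (0:ℝ) < n := by exact_mod_cast hn
  -- the transformation
  set g : ℝ × ℝ → ℝ := fun p => Real.sqrt ((n:ℝ) / p.2) * p.1 with hg_def
  have hg : Measurable g := by
    apply Measurable.mul
    · exact (measurable_const.div measurable_snd).sqrt
    · exact measurable_fst
  -- joint laws
  have hZM : IndepFun Z M P := by
    have := hindep.indepFun (i := 0) (j := 2) (by decide)
    simpa using this
  have hZ'M' : IndepFun Z' M' P := by
    have := hindep.indepFun (i := 1) (j := 3) (by decide)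
    simpa using this
  have h1 : P.map (fun ω => (Z ω, M ω)) =
      (gaussianReal 0 1).prod (chiSquaredMeasure n) := by
    rw [← hZ, ← hM]
    exact (indepFun_iff_map_prod_eq_prod_map_map hZmeas.aemeasurable
      hMmeas.aemeasurable).1 hZM
  have h2 : P.map (fun ω => (Z' ω, M' ω)) =
      (gaussianReal 0 1).prod (chiSquaredMeasure n) := by
    rw [← hZ', ← hM']
    exact (indepFun_iff_map_prod_eq_prod_map_map hZ'meas.aemeasurable
      hM'meas.aemeasurable).1 hZ'M'
  have hT : Measurable (fun ω => Real.sqrt ((n:ℝ) / M ω) * Z ω) :=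
    ((measurable_const.div hMmeas).sqrt).mul hZmeas
  have hT' : Measurable (fun ω => Real.sqrt ((n:ℝ) / M' ω) * Z' ω) :=
    ((measurable_const.div hM'meas).sqrt).mul hZ'meas
  have hmapeq : P.map (fun ω => Real.sqrt ((n:ℝ) / M ω) * Z ω) =
      P.map (fun ω => Real.sqrt ((n:ℝ) / M' ω) * Z' ω) := by
    have e1 : (fun ω => Real.sqrt ((n:ℝ) / M ω) * Z ω)
        = g ∘ (fun ω => (Z ω, M ω)) := rfl
    have e2 : (fun ω => Real.sqrt ((n:ℝ) / M' ω) * Z' ω)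
        = g ∘ (fun ω => (Z' ω, M' ω)) := rfl
    rw [e1, e2, ← Measure.map_map hg (hZmeas.prodMk hMmeas),
      ← Measure.map_map hg (hZ'meas.prodMk hM'meas), h1, h2]
  -- M > 0 a.s.
  have hMpos : ∀ᵐ ω ∂P, 0 < M ω := by
    rw [ae_iff]
    have : {ω | ¬ 0 < M ω} = M ⁻¹' Set.Iic 0 := by ext ω; simp
    rw [this, ← Measure.map_apply hMmeas measurableSet_Iic, hM,
      chiSquaredMeasure_Iic_zero]
  -- event equality a.e.
  have hsets : {ω | σ * Z ω ≤ σ * Real.sqrt (M ω / (n:ℝ)) * q}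
      =ᵐ[P] {ω | Real.sqrt ((n:ℝ) / M ω) * Z ω ≤ q} := by
    rw [Filter.eventuallyEq_set]
    filter_upwards [hMpos] with ω hω
    have hs : 0 < Real.sqrt (M ω / (n:ℝ)) :=
      Real.sqrt_pos.2 (div_pos hω hn0)
    have hinv : Real.sqrt ((n:ℝ) / M ω) = (Real.sqrt (M ω / (n:ℝ)))⁻¹ := by
      rw [← Real.sqrt_inv, inv_div]
    simp only [Set.mem_setOf_eq, hinv]
    rw [mul_assoc, mul_le_mul_iff_right₀ hσ, inv_mul_le_iff₀ hs]
  rw [measure_congr hsets]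
  have hB : {ω | Real.sqrt ((n:ℝ) / M ω) * Z ω ≤ q}
      = (fun ω => Real.sqrt ((n:ℝ) / M ω) * Z ω) ⁻¹' Set.Iic q := rfl
  rw [hB, Measure.map_apply hT measurableSet_Iic |>.symm, hmapeq]
  haveI : IsProbabilityMeasure
      (P.map (fun ω => Real.sqrt ((n:ℝ) / M' ω) * Z' ω)) :=
    Measure.isProbabilityMeasure_map hT'.aemeasurable
  rw [← hq, cdf_eq_real, measureReal_def, ENNReal.ofReal_toReal (measure_ne_top _ _)]
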